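/- Let Γ be a ribbon graph with at least N vertices, where N ≥ 1. Then the number of equivalence classes of N-rooted graphs whose underlying ribbon graph is isomorphic to Γ equals R_N^Γ/|Aut(Γ)|, where R_N^Γ is the number of ways to choose an ordered N-tuple of distinct vertices of Γ together with one half-edge incident to each chosen vertex; equivalently, R_N^Γ = Σ deg(v1)⋯deg(vN), the sum running over ordered N-tuples (v1, …, vN) of distinct vertices of Γ. -/

import Mathlib

/-- The number of cycles (orbits, including fixed points) of a permutation. -/
noncomputable def permCycleCount {H : Type*} (σ : Equiv.Perm H) : ℕ :=
  Nat.card (Quot σ.SameCycle)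

/-- An `N`-rooted ribbon graph on the half-edge set `Fin (2e)` whose underlying
ribbon graph is isomorphic to `(α, σ)` : a ribbon graph `(α', σ')` isomorphic
to `(α, σ)`, together with `N` root half-edges lying in pairwise distinct
cycles of `σ'` (the ordered root vertices being the cycles containing them). -/
structure NRootedOn (N e : ℕ) (α σ : Equiv.Perm (Fin (2 * e))) where
  α' : Equiv.Perm (Fin (2 * e))
  σ' : Equiv.Perm (Fin (2 * e))
  hinv : ∀ h, α' (α' h) = h
  hfpf : ∀ h, α' h ≠ h
  htrans : ∀ h h', ∃ p ∈ Subgroup.closure ({α', σ'} : Set (Equiv.Perm (Fin (2 * e)))), p h = h'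
  hiso : ∃ ψ : Equiv.Perm (Fin (2 * e)), ψ * α = α' * ψ ∧ ψ * σ = σ' * ψ
  root : Fin N → Fin (2 * e)
  hdistinct : ∀ i j, σ'.SameCycle (root i) (root j) → i = j

/-- Isomorphism of `N`-rooted graphs: an isomorphism of the underlying ribbon
graphs carrying the `k`-th root to the `k`-th root for every `k`. -/
def NRootedOnRel (N e : ℕ) (α σ : Equiv.Perm (Fin (2 * e))) :
    NRootedOn N e α σ → NRootedOn N e α σ → Prop :=
  fun Γ Γ' => ∃ ψ : Equiv.Perm (Fin (2 * e)),
    ψ * Γ.α' = Γ'.α' * ψ ∧ ψ * Γ.σ' = Γ'.σ' * ψ ∧ ∀ k, ψ (Γ.root k) = Γ'.root k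

section Aux

open MulAction

variable {N e : ℕ}

/-- The automorphism group of the ribbon graph `(α, σ)`. -/
abbrev AutG (α σ : Equiv.Perm (Fin (2 * e))) : Subgroup (Equiv.Perm (Fin (2 * e))) :=
  Subgroup.centralizer ({α, σ} : Set (Equiv.Perm (Fin (2 * e))))

/-- Tuples of half-edges in pairwise distinct cycles of `σ`. -/
abbrev RootSet (N e : ℕ) (σ : Equiv.Perm (Fin (2 * e))) :=
  {r : Fin N → Fin (2 * e) // ∀ i j, σ.SameCycle (r i) (r j) → i = j}

lemma mem_AutG_iff {α σ ψ : Equiv.Perm (Fin (2 * e))} :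
    ψ ∈ AutG α σ ↔ ψ * α = α * ψ ∧ ψ * σ = σ * ψ := by
  rw [Subgroup.mem_centralizer_iff]
  constructor
  · intro h
    exact ⟨(h α (by simp)).symm, (h σ (by simp)).symm⟩
  · rintro ⟨h1, h2⟩ g hg
    rcases (by simpa using hg : g = α ∨ g = σ) with rfl | rfl
    · exact h1.symm
    · exact h2.symm

lemma semiconj_sameCycle {σ σ' ψ : Equiv.Perm (Fin (2 * e))} (h : ψ * σ = σ' * ψ)
    {x y : Fin (2 * e)} (hxy : σ.SameCycle x y) : σ'.SameCycle (ψ x) (ψ y) := by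
  obtain ⟨n, hn⟩ := hxy
  refine ⟨n, ?_⟩
  have hz : ψ * σ ^ n = σ' ^ n * ψ := (SemiconjBy.zpow_right h n)
  calc (σ' ^ n) (ψ x) = (σ' ^ n * ψ) x := rfl
    _ = (ψ * σ ^ n) x := by rw [hz]
    _ = ψ ((σ ^ n) x) := rfl
    _ = ψ y := by rw [hn]

instance instRootSMul {α σ : Equiv.Perm (Fin (2 * e))} :
    SMul (AutG α σ) (RootSet N e σ) where
  smul ψ r := ⟨fun k => ψ.1 (r.1 k), by
    intro i j hij
    exact r.2 i j (by
      have hc : ψ.1⁻¹ * σ = σ * ψ.1⁻¹ := by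
        have := (mem_AutG_iff.1 ψ.2).2
        have : Commute ψ.1 σ := this
        exact this.inv_left
      have := semiconj_sameCycle hc hij
      simpa using this)⟩

@[simp] lemma rootSMul_apply {α σ : Equiv.Perm (Fin (2 * e))}
    (ψ : AutG α σ) (r : RootSet N e σ) (k : Fin N) :
    ((ψ • r : RootSet N e σ)).1 k = ψ.1 (r.1 k) := rfl

instance instRootAction {α σ : Equiv.Perm (Fin (2 * e))} :
    MulAction (AutG α σ) (RootSet N e σ) where
  one_smul r := Subtype.ext (funext fun _ => rfl)
  mul_smul ψ φ r := Subtype.ext (funext fun _ => rfl)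

lemma aut_eq_one {α σ ψ : Equiv.Perm (Fin (2 * e))}
    (hψ : ψ ∈ AutG α σ)
    (htrans : ∀ h h' : Fin (2 * e),
      ∃ p ∈ Subgroup.closure ({α, σ} : Set (Equiv.Perm (Fin (2 * e)))), p h = h')
    {h0 : Fin (2 * e)} (hfix : ψ h0 = h0) : ψ = 1 := by
  have hsub : Subgroup.closure ({α, σ} : Set (Equiv.Perm (Fin (2 * e))))
      ≤ Subgroup.centralizer {ψ} := by
    rw [Subgroup.closure_le]
    intro g hg
    rw [SetLike.mem_coe, Subgroup.mem_centralizer_iff]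
    rintro q hq
    rcases (by simpa using hq : q = ψ) with rfl
    rcases (by simpa using hg : g = α ∨ g = σ) with rfl | rfl
    · exact (mem_AutG_iff.1 hψ).1
    · exact (mem_AutG_iff.1 hψ).2
  refine Equiv.ext fun x => ?_
  show ψ x = x
  obtain ⟨p, hp, hpx⟩ := htrans h0 x
  have hcomm : ψ * p = p * ψ :=
    Subgroup.mem_centralizer_iff.1 (hsub hp) ψ (by simp)
  calc ψ x = ψ (p h0) := by rw [hpx]
    _ = (ψ * p) h0 := rfl
    _ = (p * ψ) h0 := by rw [hcomm]
    _ = p (ψ h0) := rfl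
    _ = p h0 := by rw [hfix]
    _ = x := hpx

lemma stabilizer_eq_bot {α σ : Equiv.Perm (Fin (2 * e))} (hN : 1 ≤ N)
    (htrans : ∀ h h' : Fin (2 * e),
      ∃ p ∈ Subgroup.closure ({α, σ} : Set (Equiv.Perm (Fin (2 * e)))), p h = h')
    (r : RootSet N e σ) : stabilizer (AutG α σ) r = ⊥ := by
  rw [Subgroup.eq_bot_iff_forall]
  intro ψ hmem
  have hfix : ψ.1 (r.1 ⟨0, hN⟩) = r.1 ⟨0, hN⟩ := by
    have := mem_stabilizer_iff.1 hmem
    exact congrFun (congrArg Subtype.val this) ⟨0, hN⟩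
  exact Subtype.ext (aut_eq_one ψ.2 htrans hfix)

lemma card_rootSet (α σ : Equiv.Perm (Fin (2 * e))) (hN : 1 ≤ N)
    (htrans : ∀ h h' : Fin (2 * e),
      ∃ p ∈ Subgroup.closure ({α, σ} : Set (Equiv.Perm (Fin (2 * e)))), p h = h') :
    Nat.card (RootSet N e σ)
      = Nat.card (orbitRel.Quotient (AutG α σ) (RootSet N e σ)) * Nat.card (AutG α σ) := by
  have e1 := MulAction.selfEquivSigmaOrbitsQuotientStabilizer (AutG α σ) (RootSet N e σ)
  have e2 : (Σ _ : orbitRel.Quotient (AutG α σ) (RootSet N e σ), (AutG α σ))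
      ≃ orbitRel.Quotient (AutG α σ) (RootSet N e σ) × (AutG α σ) :=
    Equiv.sigmaEquivProd _ _
  have e3 : (Σ ω : orbitRel.Quotient (AutG α σ) (RootSet N e σ),
      (AutG α σ) ⧸ stabilizer (AutG α σ) ω.out)
      ≃ (Σ _ : orbitRel.Quotient (AutG α σ) (RootSet N e σ), (AutG α σ)) :=
    Equiv.sigmaCongrRight fun ω =>
      (Subgroup.quotientEquivOfEq (stabilizer_eq_bot hN htrans ω.out)).trans
        (QuotientGroup.quotientBot (G := ↥(AutG α σ))).toEquiv
  rw [Nat.card_congr ((e1.trans e3).trans e2), Nat.card_prod]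

variable (N e) in
/-- The forward map: choose an isomorphism and pull the roots back. -/
noncomputable def fwd {α σ : Equiv.Perm (Fin (2 * e))} (Γ : NRootedOn N e α σ) :
    RootSet N e σ :=
  ⟨fun k => Γ.hiso.choose⁻¹ (Γ.root k), by
    intro i j hij
    have hψσ : Γ.hiso.choose * σ = Γ.σ' * Γ.hiso.choose := Γ.hiso.choose_spec.2
    have := semiconj_sameCycle hψσ hij
    simp only [Equiv.Perm.inv_def, Equiv.apply_symm_apply] at this
    exact Γ.hdistinct i j this⟩

variable (N e) in
def bwd (α σ : Equiv.Perm (Fin (2 * e)))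
    (hinv : ∀ h, α (α h) = h) (hfpf : ∀ h, α h ≠ h)
    (htrans : ∀ h h' : Fin (2 * e),
      ∃ p ∈ Subgroup.closure ({α, σ} : Set (Equiv.Perm (Fin (2 * e)))), p h = h')
    (r : RootSet N e σ) : NRootedOn N e α σ :=
  ⟨α, σ, hinv, hfpf, htrans, ⟨1, by simp⟩, r.1, r.2⟩

lemma fwd_rel {α σ : Equiv.Perm (Fin (2 * e))} {Γ Γ' : NRootedOn N e α σ}
    (h : NRootedOnRel N e α σ Γ Γ') :
    (Quotient.mk'' (fwd N e Γ) : orbitRel.Quotient (AutG α σ) (RootSet N e σ))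
      = Quotient.mk'' (fwd N e Γ') := by
  obtain ⟨φ, hφα, hφσ, hφroot⟩ := h
  set ψ₁ := Γ.hiso.choose with hψ₁def
  set ψ₂ := Γ'.hiso.choose with hψ₂def
  obtain ⟨h1α, h1σ⟩ := Γ.hiso.choose_spec
  obtain ⟨h2α, h2σ⟩ := Γ'.hiso.choose_spec
  have hgα : SemiconjBy (ψ₂⁻¹ * (φ * ψ₁)) α α :=
    SemiconjBy.mul_left (SemiconjBy.inv_symm_left h2α)
      (SemiconjBy.mul_left hφα h1α)
  have hgσ : SemiconjBy (ψ₂⁻¹ * (φ * ψ₁)) σ σ :=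
    SemiconjBy.mul_left (SemiconjBy.inv_symm_left h2σ)
      (SemiconjBy.mul_left hφσ h1σ)
  have hmem : ψ₂⁻¹ * (φ * ψ₁) ∈ AutG α σ := mem_AutG_iff.2 ⟨hgα, hgσ⟩
  refine Quotient.sound' ?_
  rw [MulAction.orbitRel_apply, MulAction.mem_orbit_iff]
  refine ⟨(⟨ψ₂⁻¹ * (φ * ψ₁), hmem⟩ : AutG α σ)⁻¹, ?_⟩
  apply Subtype.ext
  funext k
  have : (ψ₂⁻¹ * (φ * ψ₁)) ((fwd N e Γ).1 k) = (fwd N e Γ').1 k := by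
    show (ψ₂⁻¹ * (φ * ψ₁)) (ψ₁⁻¹ (Γ.root k)) = ψ₂⁻¹ (Γ'.root k)
    simp [Equiv.Perm.mul_apply, hφroot k]
  calc ((((⟨ψ₂⁻¹ * (φ * ψ₁), hmem⟩ : AutG α σ))⁻¹ • fwd N e Γ').1 k)
      = (ψ₂⁻¹ * (φ * ψ₁))⁻¹ ((fwd N e Γ').1 k) := rfl
    _ = (ψ₂⁻¹ * (φ * ψ₁))⁻¹ ((ψ₂⁻¹ * (φ * ψ₁)) ((fwd N e Γ).1 k)) := by rw [this]
    _ = (fwd N e Γ).1 k := by simp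

variable (N e) in
noncomputable def quotEquiv (α σ : Equiv.Perm (Fin (2 * e)))
    (hinv : ∀ h, α (α h) = h) (hfpf : ∀ h, α h ≠ h)
    (htrans : ∀ h h' : Fin (2 * e),
      ∃ p ∈ Subgroup.closure ({α, σ} : Set (Equiv.Perm (Fin (2 * e)))), p h = h') :
    Quot (NRootedOnRel N e α σ) ≃ orbitRel.Quotient (AutG α σ) (RootSet N e σ) where
  toFun := Quot.lift (fun Γ => Quotient.mk'' (fwd N e Γ)) (fun _ _ h => fwd_rel h)
  invFun := Quotient.lift (fun r => Quot.mk _ (bwd N e α σ hinv hfpf htrans r))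
    (by
      intro r r' hrel
      obtain ⟨g, hg⟩ : ∃ g : AutG α σ, g • r' = r :=
        MulAction.mem_orbit_iff.1 (MulAction.orbitRel_apply.1 hrel)
      apply Quot.sound
      refine ⟨g.1⁻¹, ?_, ?_, ?_⟩
      · exact Commute.inv_left (mem_AutG_iff.1 g.2).1
      · exact Commute.inv_left (mem_AutG_iff.1 g.2).2
      · intro k
        show g.1⁻¹ (r.1 k) = r'.1 k
        have : g.1 (r'.1 k) = r.1 k := congrFun (congrArg Subtype.val hg) k
        rw [← this]; simp)
  left_inv := by
    apply Quot.ind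
    intro Γ
    show Quot.mk _ (bwd N e α σ hinv hfpf htrans (fwd N e Γ)) = Quot.mk _ Γ
    apply Quot.sound
    refine ⟨Γ.hiso.choose, Γ.hiso.choose_spec.1, Γ.hiso.choose_spec.2, ?_⟩
    intro k
    show Γ.hiso.choose ((fwd N e Γ).1 k) = Γ.root k
    show Γ.hiso.choose (Γ.hiso.choose⁻¹ (Γ.root k)) = Γ.root k
    simp
  right_inv := by
    apply Quotient.ind
    intro r
    show Quotient.mk'' (fwd N e (bwd N e α σ hinv hfpf htrans r)) = Quotient.mk'' r
    refine Quotient.sound' ?_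
    rw [MulAction.orbitRel_apply, MulAction.mem_orbit_iff]
    set Γ := bwd N e α σ hinv hfpf htrans r with hΓ
    have hmem : Γ.hiso.choose ∈ AutG α σ :=
      mem_AutG_iff.2 ⟨Γ.hiso.choose_spec.1, Γ.hiso.choose_spec.2⟩
    refine ⟨(⟨Γ.hiso.choose, hmem⟩ : AutG α σ)⁻¹, ?_⟩
    apply Subtype.ext
    funext k
    rfl

end Aux

/-- for a ribbon graph `Γ = (α, σ)` with at least `N ≥ 1`
vertices, the number of equivalence classes of `N`-rooted graphs whose
underlying ribbon graph is isomorphic to `Γ` equals `R_N^Γ / |Aut(Γ)|`, where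
`R_N^Γ` is the number of choices of an ordered `N`-tuple of distinct vertices
of `Γ` together with one half-edge incident to each chosen vertex (equivalently,
of an `N`-tuple of half-edges lying in pairwise distinct cycles of `σ`). -/
theorem stmt14 (N e : ℕ) (hN : 1 ≤ N) (he : 1 ≤ e)
    (α σ : Equiv.Perm (Fin (2 * e)))
    (hinv : ∀ h, α (α h) = h)
    (hfpf : ∀ h, α h ≠ h)
    (htrans : ∀ h h' : Fin (2 * e),
      ∃ p ∈ Subgroup.closure ({α, σ} : Set (Equiv.Perm (Fin (2 * e)))), p h = h')
    (hver : N ≤ permCycleCount σ) :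
    (Nat.card (Quot (NRootedOnRel N e α σ)) : ℚ)
      = (Nat.card {r : Fin N → Fin (2 * e) //
            ∀ i j, σ.SameCycle (r i) (r j) → i = j} : ℚ)
        / (Nat.card {ψ : Equiv.Perm (Fin (2 * e)) //
            ψ * α = α * ψ ∧ ψ * σ = σ * ψ} : ℚ) := by
  have hGcard : Nat.card {ψ : Equiv.Perm (Fin (2 * e)) //
        ψ * α = α * ψ ∧ ψ * σ = σ * ψ} = Nat.card (AutG α σ) :=
    Nat.card_congr (Equiv.subtypeEquivRight fun ψ => mem_AutG_iff.symm)
  have hQ : Nat.card (Quot (NRootedOnRel N e α σ))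
      = Nat.card (MulAction.orbitRel.Quotient (AutG α σ) (RootSet N e σ)) :=
    Nat.card_congr (quotEquiv N e α σ hinv hfpf htrans)
  have hR := card_rootSet α σ hN htrans
  have hG0 : (Nat.card (AutG α σ) : ℚ) ≠ 0 := by
    have : 0 < Nat.card (AutG α σ) := Nat.card_pos
    exact_mod_cast this.ne'
  rw [hGcard, hQ]
  rw [eq_div_iff hG0]
  show _ = ((Nat.card (RootSet N e σ) : ℚ))
  rw [hR]
  push_cast
  ring
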